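/- Let H1, H2 be Hilbert spaces, K : H1 → H2 a bounded linear operator, β > 0 and n ∈ H2. Then K*K + βI is invertible on H1, the functional w ↦ ‖K*w − K*n‖²_{H1} + β‖w‖²_{H2} over w ∈ H2 is minimized by W = K (K*K + βI)^{−1} K* n, and its infimum equals β ⟨n, K (K*K + βI)^{−1} K* n⟩_{H2}. -/
import Mathlib


open scoped RealInnerProductSpace

noncomputable def bilinAux {H : Type*} [NormedAddCommGroup H] [InnerProductSpace ℝ H]
    (A : H →L[ℝ] H) : H →L[ℝ] H →L[ℝ] ℝ :=
  LinearMap.mkContinuous₂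
    (LinearMap.mk₂ ℝ (fun x y => ⟪A x, y⟫)
      (fun x x' y => by simp [inner_add_left])
      (fun c x y => by simp [inner_smul_left])
      (fun x y y' => inner_add_right _ _ _)
      (fun c x y => inner_smul_right _ _ _))
    ‖A‖
    (fun x y => by
      calc ‖⟪A x, y⟫‖ ≤ ‖A x‖ * ‖y‖ := by
            simpa using abs_real_inner_le_norm (A x) y
        _ ≤ ‖A‖ * ‖x‖ * ‖y‖ := by
            gcongr; exact A.le_opNorm x)

theorem invAux {H : Type*} [NormedAddCommGroup H] [InnerProductSpace ℝ H] [CompleteSpace H]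
    (A : H →L[ℝ] H) (β : ℝ) (hβ : 0 < β) (hcoer : ∀ x, β * ‖x‖ * ‖x‖ ≤ ⟪A x, x⟫) :
    ∃ T : H →L[ℝ] H, A.comp T = ContinuousLinearMap.id ℝ H ∧
      T.comp A = ContinuousLinearMap.id ℝ H := by
  have coercive : IsCoercive (bilinAux A) := ⟨β, hβ, fun x => hcoer x⟩
  set e := coercive.continuousLinearEquivOfBilin with he
  have hA : (e : H →L[ℝ] H) = A := by
    ext x
    apply ext_inner_right ℝ
    intro w
    exact (coercive.continuousLinearEquivOfBilin_apply x w).trans rfl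
  have h1 : ∀ y, A y = e y := fun y => by rw [← hA]; rfl
  refine ⟨e.symm.toContinuousLinearMap, ?_, ?_⟩
  · ext x
    have : A (e.symm x) = x := by rw [h1]; exact e.apply_symm_apply x
    simpa using this
  · ext x
    have : e.symm (A x) = x := by rw [h1]; exact e.symm_apply_apply x
    simpa using this

/-- Lemma 4.2 (abstract form): for Hilbert spaces `H1, H2`, a bounded linear
`K : H1 → H2`, `β > 0` and `n ∈ H2`, the operator `K*K + βI` is boundedly invertible
(with inverse `T`), the functional `w ↦ ‖K*w − K*n‖² + β‖w‖²` on `H2` is minimized by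
`W = K (K*K + βI)^{−1} K* n = K (T (K* n))`, and its infimum equals
`β ⟨n, K (K*K + βI)^{−1} K* n⟩`. -/
theorem stmt16
    {H1 H2 : Type*}
    [NormedAddCommGroup H1] [InnerProductSpace ℝ H1] [CompleteSpace H1]
    [NormedAddCommGroup H2] [InnerProductSpace ℝ H2] [CompleteSpace H2]
    (K : H1 →L[ℝ] H2) (β : ℝ) (hβ : 0 < β) (n : H2) :
    ∃ T : H1 →L[ℝ] H1,
      ((ContinuousLinearMap.adjoint K).comp K
          + β • ContinuousLinearMap.id ℝ H1).comp T = ContinuousLinearMap.id ℝ H1 ∧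
      T.comp ((ContinuousLinearMap.adjoint K).comp K
          + β • ContinuousLinearMap.id ℝ H1) = ContinuousLinearMap.id ℝ H1 ∧
      (∀ w : H2,
        ‖ContinuousLinearMap.adjoint K (K (T (ContinuousLinearMap.adjoint K n)))
            - ContinuousLinearMap.adjoint K n‖ ^ 2
            + β * ‖K (T (ContinuousLinearMap.adjoint K n))‖ ^ 2
          ≤ ‖ContinuousLinearMap.adjoint K w - ContinuousLinearMap.adjoint K n‖ ^ 2
            + β * ‖w‖ ^ 2) ∧
      (⨅ w : H2, (‖ContinuousLinearMap.adjoint K w - ContinuousLinearMap.adjoint K n‖ ^ 2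
            + β * ‖w‖ ^ 2))
        = β * ⟪n, K (T (ContinuousLinearMap.adjoint K n))⟫ := by
  set Ks := ContinuousLinearMap.adjoint K with hKs
  set A : H1 →L[ℝ] H1 := Ks.comp K + β • ContinuousLinearMap.id ℝ H1 with hAdef
  have hcoer : ∀ x, β * ‖x‖ * ‖x‖ ≤ ⟪A x, x⟫ := by
    intro x
    have : ⟪A x, x⟫ = ‖K x‖ ^ 2 + β * ‖x‖ ^ 2 := by
      simp only [hAdef, ContinuousLinearMap.add_apply, ContinuousLinearMap.comp_apply,
        ContinuousLinearMap.smul_apply, ContinuousLinearMap.id_apply, inner_add_left,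
        real_inner_smul_left, hKs, ContinuousLinearMap.adjoint_inner_left]
      rw [real_inner_self_eq_norm_sq, real_inner_self_eq_norm_sq]
    rw [this]
    nlinarith [sq_nonneg ‖K x‖, sq_nonneg ‖x‖, norm_nonneg x]
  obtain ⟨T, hT1, hT2⟩ := invAux A β hβ hcoer
  refine ⟨T, hT1, hT2, ?_⟩
  set W : H2 := K (T (Ks n)) with hWdef
  -- key identity: K (Ks W) + β • W = K (Ks n)
  have hTA : A (T (Ks n)) = Ks n := by
    have := ContinuousLinearMap.ext_iff.mp hT1 (Ks n)
    simpa using this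
  have hW : K (Ks W) + β • W = K (Ks n) := by
    have : Ks W + β • T (Ks n) = Ks n := by
      simpa [hAdef, ContinuousLinearMap.add_apply, hWdef] using hTA
    calc K (Ks W) + β • W = K (Ks W + β • T (Ks n)) := by
          rw [map_add, map_smul]
      _ = K (Ks n) := by rw [this]
  have hcross : ∀ v : H2, ⟪Ks W - Ks n, Ks v⟫ + β * ⟪W, v⟫ = 0 := by
    intro v
    have h1 : ⟪Ks W - Ks n, Ks v⟫ = ⟪K (Ks W - Ks n), v⟫ :=
      ContinuousLinearMap.adjoint_inner_right K _ _
    have h2 : K (Ks W - Ks n) = -(β • W) := by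
      rw [map_sub, ← hW]; abel
    rw [h1, h2]
    simp [real_inner_smul_left]
  have hexpand : ∀ w : H2, ‖Ks w - Ks n‖ ^ 2 + β * ‖w‖ ^ 2
      = (‖Ks W - Ks n‖ ^ 2 + β * ‖W‖ ^ 2) + (‖Ks (w - W)‖ ^ 2 + β * ‖w - W‖ ^ 2) := by
    intro w
    have e1 : Ks w - Ks n = (Ks W - Ks n) + Ks (w - W) := by
      rw [map_sub]; abel
    have e2 : w = W + (w - W) := by abel
    have hc := hcross (w - W)
    calc ‖Ks w - Ks n‖ ^ 2 + β * ‖w‖ ^ 2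
        = ‖(Ks W - Ks n) + Ks (w - W)‖ ^ 2 + β * ‖W + (w - W)‖ ^ 2 := by
          rw [← e1, ← e2]
      _ = (‖Ks W - Ks n‖ ^ 2 + β * ‖W‖ ^ 2) + (‖Ks (w - W)‖ ^ 2 + β * ‖w - W‖ ^ 2) := by
          rw [norm_add_sq_real, norm_add_sq_real]
          linear_combination 2 * hc
  have hmin : ∀ w : H2, ‖Ks W - Ks n‖ ^ 2 + β * ‖W‖ ^ 2
      ≤ ‖Ks w - Ks n‖ ^ 2 + β * ‖w‖ ^ 2 := by
    intro w
    rw [hexpand w]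
    have : (0:ℝ) ≤ ‖Ks (w - W)‖ ^ 2 + β * ‖w - W‖ ^ 2 := by positivity
    linarith
  refine ⟨hmin, ?_⟩
  have hJW : ‖Ks W - Ks n‖ ^ 2 + β * ‖W‖ ^ 2 = β * ⟪n, W⟫ := by
    have e1 : Ks W - Ks n = Ks (W - n) := (map_sub Ks W n).symm
    have e2 : ‖Ks (W - n)‖ ^ 2 = ⟪W - n, K (Ks (W - n))⟫ := by
      rw [← real_inner_self_eq_norm_sq]
      exact ContinuousLinearMap.adjoint_inner_left K _ _
    have e3 : K (Ks (W - n)) = -(β • W) := by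
      rw [map_sub, map_sub, ← hW]; abel
    rw [e1, e2, e3]
    have : ⟪W - n, -(β • W)⟫ = -(β * ⟪W, W⟫) + β * ⟪n, W⟫ := by
      simp [inner_sub_left, real_inner_smul_right]
      ring
    rw [this, real_inner_self_eq_norm_sq]
    ring
  have hinf : (⨅ w : H2, (‖Ks w - Ks n‖ ^ 2 + β * ‖w‖ ^ 2))
      = ‖Ks W - Ks n‖ ^ 2 + β * ‖W‖ ^ 2 := by
    refine le_antisymm ?_ (le_ciInf hmin)
    exact ciInf_le ⟨_, by rintro x ⟨w, rfl⟩; exact hmin w⟩ W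
  rw [hinf, hJW]
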